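/- For all nonnegative reals x, y, u, v, the inequality √(sinh²(x+y) + sinh²(u+v)) ≤ √(sinh²x + sinh²u)·√(1 + sinh²y + sinh²v) + √(sinh²y + sinh²v)·√(1 + sinh²x + sinh²u) holds. -/

import Mathlib

lemma tri_aux (a b c d : ℝ) :
    Real.sqrt ((a + b) ^ 2 + (c + d) ^ 2) ≤
      Real.sqrt (a ^ 2 + c ^ 2) + Real.sqrt (b ^ 2 + d ^ 2) := by
  have h := norm_add_le (⟨a, c⟩ : ℂ) ⟨b, d⟩
  simpa [Complex.norm_def, Complex.normSq_mk, Complex.normSq_apply, Complex.ext_iff, Complex.add_re, Complex.add_im, sq] using h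

theorem sinh_sqrt_ineq (x y u v : ℝ) (hx : 0 ≤ x) (hy : 0 ≤ y) (hu : 0 ≤ u) (hv : 0 ≤ v) :
    Real.sqrt (Real.sinh (x + y) ^ 2 + Real.sinh (u + v) ^ 2) ≤
      Real.sqrt (Real.sinh x ^ 2 + Real.sinh u ^ 2) *
        Real.sqrt (1 + Real.sinh y ^ 2 + Real.sinh v ^ 2) +
      Real.sqrt (Real.sinh y ^ 2 + Real.sinh v ^ 2) *
        Real.sqrt (1 + Real.sinh x ^ 2 + Real.sinh u ^ 2) := by
  rw [Real.sinh_add, Real.sinh_add]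
  have h1 : Real.sqrt ((Real.sinh x * Real.cosh y) ^ 2 + (Real.sinh u * Real.cosh v) ^ 2) ≤
      Real.sqrt (Real.sinh x ^ 2 + Real.sinh u ^ 2) *
        Real.sqrt (1 + Real.sinh y ^ 2 + Real.sinh v ^ 2) := by
    rw [← Real.sqrt_mul (by positivity)]
    apply Real.sqrt_le_sqrt
    have hy2 := Real.cosh_sq y
    have hv2 := Real.cosh_sq v
    nlinarith [sq_nonneg (Real.sinh x * Real.sinh v), sq_nonneg (Real.sinh u * Real.sinh y)]
  have h2 : Real.sqrt ((Real.cosh x * Real.sinh y) ^ 2 + (Real.cosh u * Real.sinh v) ^ 2) ≤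
      Real.sqrt (Real.sinh y ^ 2 + Real.sinh v ^ 2) *
        Real.sqrt (1 + Real.sinh x ^ 2 + Real.sinh u ^ 2) := by
    rw [← Real.sqrt_mul (by positivity)]
    apply Real.sqrt_le_sqrt
    have hx2 := Real.cosh_sq x
    have hu2 := Real.cosh_sq u
    nlinarith [sq_nonneg (Real.sinh y * Real.sinh u), sq_nonneg (Real.sinh v * Real.sinh x)]
  calc Real.sqrt ((Real.sinh x * Real.cosh y + Real.cosh x * Real.sinh y) ^ 2 +
        (Real.sinh u * Real.cosh v + Real.cosh u * Real.sinh v) ^ 2)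
      ≤ Real.sqrt ((Real.sinh x * Real.cosh y) ^ 2 + (Real.sinh u * Real.cosh v) ^ 2) +
        Real.sqrt ((Real.cosh x * Real.sinh y) ^ 2 + (Real.cosh u * Real.sinh v) ^ 2) :=
      tri_aux _ _ _ _
    _ ≤ _ := add_le_add h1 h2
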